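/- arXiv:2503.07665 — 2 statements merged into one kernel-verified Lean document; each statement's English description precedes it below -/
import Mathlib

section
/- Under the hypotheses of the distance-preservation setting (G' induced subgraph of G containing X, and every component H of G − X either entirely inside G' or entirely outside with at least two isomorphic copies H', H'' inside G', where the isomorphisms preserve adjacency to X and ball membership), the map sending each ball B_r(u) of G with u ∈ V(G') to B_r(u) ∩ V(G') is injective, and each such intersection is itself a ball of radius r around u in G'. -/
/-- The ball of radius `r` around `v`: vertices reachable by a walk of length at most `r`. -/
def graphBall {V : Type*} (G : SimpleGraph V) (v : V) (r : ℕ) : Set V :=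
  {w | ∃ p : G.Walk v w, p.length ≤ r}

/-- The support of a connected component of `G − X`, as a set of vertices of `G`. -/
def compSupp {V : Type*} (G : SimpleGraph V) (X : Set V)
    (c : (G.induce (Xᶜ : Set V)).ConnectedComponent) : Set V :=
  Subtype.val '' c.supp

open SimpleGraph in
lemma mem_compSupp {V : Type*} {G : SimpleGraph V} {X : Set V}
    {c : (G.induce (Xᶜ : Set V)).ConnectedComponent} {z : V} :
    z ∈ compSupp G X c ↔ ∃ h : z ∈ (Xᶜ : Set V),
      (G.induce (Xᶜ : Set V)).connectedComponentMk ⟨z, h⟩ = c := by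
  constructor
  · rintro ⟨⟨z', hz'⟩, hmk, rfl⟩
    exact ⟨hz', (SimpleGraph.ConnectedComponent.mem_supp_iff _ _).mp hmk⟩
  · rintro ⟨h, hmk⟩
    exact ⟨⟨z, h⟩, (SimpleGraph.ConnectedComponent.mem_supp_iff _ _).mpr hmk, rfl⟩

lemma key_reroute {V : Type*} (G : SimpleGraph V) (X : Set V)
    (c₁ c₂ : (G.induce (Xᶜ : Set V)).ConnectedComponent)
    (γ : (compSupp G X c₁) → (compSupp G X c₂))
    (hadj : ∀ u v : (compSupp G X c₁), G.Adj u v → G.Adj (γ u) (γ v))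
    (hX : ∀ (u : (compSupp G X c₁)) (x : V), x ∈ X → G.Adj u x → G.Adj (γ u) x)
    (a : V) :
    ∀ (z : V) (q : G.Walk z a), a ∉ compSupp G X c₁ → ∀ (hz : z ∈ compSupp G X c₁),
      ∃ q' : G.Walk (γ ⟨z, hz⟩ : V) a, q'.length = q.length := by
  intro z q
  induction q with
  | nil => intro ha hz; exact absurd hz ha
  | @cons z y b h q ih =>
    intro ha hz
    have ihy := ih ha
    by_cases hy : y ∈ compSupp G X c₁
    · obtain ⟨q', hq'⟩ := ihy hy
      exact ⟨SimpleGraph.Walk.cons (hadj ⟨z, hz⟩ ⟨y, hy⟩ h) q', by simp [hq']⟩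
    · have hyX : y ∈ X := by
        by_contra hyX
        obtain ⟨hzc, hzmk⟩ := mem_compSupp.mp hz
        have hyXc : y ∈ (Xᶜ : Set V) := hyX
        have hadj2 : (G.induce (Xᶜ : Set V)).Adj ⟨z, hzc⟩ ⟨y, hyXc⟩ := by
          simpa using h
        have : (G.induce (Xᶜ : Set V)).connectedComponentMk ⟨y, hyXc⟩ = c₁ := by
          rw [← hzmk]
          exact (SimpleGraph.ConnectedComponent.connectedComponentMk_eq_of_adj hadj2).symm
        exact hy (mem_compSupp.mpr ⟨hyXc, this⟩)
      exact ⟨SimpleGraph.Walk.cons (hX ⟨z, hz⟩ y hyX h) q, rfl⟩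

lemma step_lemma {V : Type*} {G : SimpleGraph V} {X S : Set V}
    {c c₀ : (G.induce (Xᶜ : Set V)).ConnectedComponent}
    (hdisj : compSupp G X c ∩ S = ∅) (hc₀ : compSupp G X c₀ ⊆ S)
    (γ : (compSupp G X c) ≃ (compSupp G X c₀))
    (h1 : ∀ u v : compSupp G X c, G.Adj u v ↔ G.Adj (γ u) (γ v))
    (h2 : ∀ (u : compSupp G X c) (x : V), x ∈ X → (G.Adj u x ↔ G.Adj (γ u) x))
    {u v w : V} {r r' : ℕ} (hu : u ∈ S) (hv : v ∉ compSupp G X c₀)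
    (hsub : graphBall G u r ∩ S ⊆ graphBall G v r' ∩ S)
    (hwc : w ∈ compSupp G X c) (hw : w ∈ graphBall G u r) : w ∈ graphBall G v r' := by
  have huc : u ∉ compSupp G X c := fun h =>
    Set.eq_empty_iff_forall_notMem.mp hdisj u ⟨h, hu⟩
  obtain ⟨p, hp⟩ := hw
  obtain ⟨q1, hq1⟩ := key_reroute G X c c₀ γ (fun a b => (h1 a b).mp)
    (fun a x hx => (h2 a x hx).mp) u w p.reverse huc hwc
  have hγwS : (γ ⟨w, hwc⟩ : V) ∈ S := hc₀ (γ ⟨w, hwc⟩).2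
  have hmem : (γ ⟨w, hwc⟩ : V) ∈ graphBall G v r' := by
    refine (hsub ⟨⟨q1.reverse, ?_⟩, hγwS⟩).1
    simp only [SimpleGraph.Walk.length_reverse] at hq1 ⊢
    omega
  obtain ⟨p2, hp2⟩ := hmem
  have h1' : ∀ a b : compSupp G X c₀, G.Adj a b → G.Adj (γ.symm a) (γ.symm b) := by
    intro a b hab
    refine (h1 (γ.symm a) (γ.symm b)).mpr ?_
    simpa using hab
  have h2' : ∀ (a : compSupp G X c₀) (x : V), x ∈ X → G.Adj a x → G.Adj (γ.symm a) x := by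
    intro a x hx hax
    refine (h2 (γ.symm a) x hx).mpr ?_
    simpa using hax
  obtain ⟨q2, hq2⟩ := key_reroute G X c₀ c γ.symm h1' h2' v
    (γ ⟨w, hwc⟩ : V) p2.reverse hv (γ ⟨w, hwc⟩).2
  have hcast : (γ.symm ⟨(γ ⟨w, hwc⟩ : V), (γ ⟨w, hwc⟩).2⟩ : V) = w := by
    rw [Subtype.coe_eta, Equiv.symm_apply_apply]
  refine ⟨(q2.reverse.copy rfl hcast), ?_⟩
  simp only [SimpleGraph.Walk.length_copy, SimpleGraph.Walk.length_reverse] at hq2 ⊢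
  omega

lemma lift_walk {V : Type*} {G : SimpleGraph V} {X S : Set V} (hXS : X ⊆ S)
    (hcomp : ∀ c : (G.induce (Xᶜ : Set V)).ConnectedComponent,
      compSupp G X c ⊆ S ∨
      (compSupp G X c ∩ S = ∅ ∧
        ∃ c' : (G.induce (Xᶜ : Set V)).ConnectedComponent,
          compSupp G X c' ⊆ S ∧
          ∃ α : (compSupp G X c) ≃ (compSupp G X c'),
            (∀ u v : compSupp G X c, G.Adj u v → G.Adj (α u) (α v)) ∧
            (∀ (u : compSupp G X c) (x : V), x ∈ X → G.Adj u x → G.Adj (α u) x))) :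
    ∀ (n : ℕ) (u w : V) (hu : u ∈ S) (hw : w ∈ S) (p : G.Walk u w), p.length ≤ n →
      ∃ p' : (G.induce S).Walk ⟨u, hu⟩ ⟨w, hw⟩, p'.length ≤ n := by
  intro n
  induction n with
  | zero =>
    intro u w hu hw p hp
    cases p with
    | nil => exact ⟨SimpleGraph.Walk.nil, by simp⟩
    | cons h q => simp at hp
  | succ n ih =>
    intro u w hu hw p hp
    cases p with
    | nil => exact ⟨SimpleGraph.Walk.nil, by simp⟩
    | @cons _ y _ h q =>
      have hq : q.length ≤ n := by
        simp only [SimpleGraph.Walk.length_cons] at hp; omega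
      by_cases hyS : y ∈ S
      · obtain ⟨q', hq'⟩ := ih y w hyS hw q hq
        have hadj' : (G.induce S).Adj ⟨u, hu⟩ ⟨y, hyS⟩ := h
        exact ⟨SimpleGraph.Walk.cons hadj' q', by simp only [SimpleGraph.Walk.length_cons]; omega⟩
      · have hyX : y ∈ (Xᶜ : Set V) := fun hh => hyS (hXS hh)
        set c := (G.induce (Xᶜ : Set V)).connectedComponentMk ⟨y, hyX⟩ with hc
        have hyc : y ∈ compSupp G X c := mem_compSupp.mpr ⟨hyX, rfl⟩
        rcases hcomp c with h1 | ⟨hdisj, c', hc'S, α, hα1, hα2⟩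
        · exact absurd (h1 hyc) hyS
        · have hwc : w ∉ compSupp G X c := fun hh =>
            Set.eq_empty_iff_forall_notMem.mp hdisj w ⟨hh, hw⟩
          obtain ⟨q1, hq1⟩ := key_reroute G X c c' α hα1 hα2 w y q hwc hyc
          have huX : u ∈ X := by
            by_contra huX
            have huXc : u ∈ (Xᶜ : Set V) := huX
            have hadj2 : (G.induce (Xᶜ : Set V)).Adj ⟨u, huXc⟩ ⟨y, hyX⟩ := by simpa using h
            have : u ∈ compSupp G X c := mem_compSupp.mpr
              ⟨huXc, SimpleGraph.ConnectedComponent.connectedComponentMk_eq_of_adj hadj2⟩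
            exact Set.eq_empty_iff_forall_notMem.mp hdisj u ⟨this, hu⟩
          have hadj : G.Adj u (α ⟨y, hyc⟩ : V) :=
            ((hα2 ⟨y, hyc⟩ u huX) h.symm).symm
          have hαS : (α ⟨y, hyc⟩ : V) ∈ S := hc'S (α ⟨y, hyc⟩).2
          obtain ⟨q', hq'⟩ := ih _ w hαS hw q1 (by omega)
          have hadj' : (G.induce S).Adj ⟨u, hu⟩ ⟨(α ⟨y, hyc⟩ : V), hαS⟩ := hadj
          exact ⟨SimpleGraph.Walk.cons hadj' q', by simp only [SimpleGraph.Walk.length_cons]; omega⟩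

lemma ball_subset {V : Type*} {G : SimpleGraph V} {X S : Set V} (hXS : X ⊆ S)
    (hcomp : ∀ c : (G.induce (Xᶜ : Set V)).ConnectedComponent,
      compSupp G X c ⊆ S ∨
      (compSupp G X c ∩ S = ∅ ∧
        ∃ c' c'' : (G.induce (Xᶜ : Set V)).ConnectedComponent, c' ≠ c'' ∧
          compSupp G X c' ⊆ S ∧ compSupp G X c'' ⊆ S ∧
          (∃ α : (compSupp G X c) ≃ (compSupp G X c'),
            (∀ u v : compSupp G X c, G.Adj u v ↔ G.Adj (α u) (α v)) ∧
            (∀ (u : compSupp G X c) (x : V), x ∈ X → (G.Adj u x ↔ G.Adj (α u) x))) ∧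
          (∃ β : (compSupp G X c) ≃ (compSupp G X c''),
            (∀ u v : compSupp G X c, G.Adj u v ↔ G.Adj (β u) (β v)) ∧
            (∀ (u : compSupp G X c) (x : V), x ∈ X → (G.Adj u x ↔ G.Adj (β u) x)))))
    {u v : V} {r r' : ℕ} (hu : u ∈ S) (hv : v ∈ S)
    (hsub : graphBall G u r ∩ S ⊆ graphBall G v r' ∩ S) :
    graphBall G u r ⊆ graphBall G v r' := by
  intro w hw
  by_cases hwS : w ∈ S
  · exact (hsub ⟨hw, hwS⟩).1
  · have hwX : w ∈ (Xᶜ : Set V) := fun hh => hwS (hXS hh)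
    set c := (G.induce (Xᶜ : Set V)).connectedComponentMk ⟨w, hwX⟩ with hc
    have hwc : w ∈ compSupp G X c := mem_compSupp.mpr ⟨hwX, rfl⟩
    rcases hcomp c with h1 | ⟨hdisj, c', c'', hne, hc'S, hc''S, ⟨α, hα1, hα2⟩, ⟨β, hβ1, hβ2⟩⟩
    · exact absurd (h1 hwc) hwS
    · have hvd : v ∉ compSupp G X c' ∨ v ∉ compSupp G X c'' := by
        by_contra hcon
        push_neg at hcon
        obtain ⟨hvX1, hmk1⟩ := mem_compSupp.mp hcon.1
        obtain ⟨hvX2, hmk2⟩ := mem_compSupp.mp hcon.2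
        exact hne (hmk1.symm.trans hmk2)
      cases hvd with
      | inl h => exact step_lemma hdisj hc'S α hα1 hα2 hu h hsub hwc hw
      | inr h => exact step_lemma hdisj hc''S β hβ1 hβ2 hu h hsub hwc hw


/-- In the distance-preservation setting (each component of `G − X` is inside `S`, or
disjoint from `S` with two isomorphic copies inside `S`, the isomorphisms preserving
adjacency to `X` and membership of balls in `𝓑`), intersecting a ball of `G` centered in
`S` with `S` yields a ball of the induced graph, and this assignment is injective on `𝓑`. -/
theorem stmt_10 {V : Type*} [Fintype V] (G : SimpleGraph V) (hG : G.Connected)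
    (𝓑 : Set (Set V)) (h𝓑 : ∀ B ∈ 𝓑, ∃ (v : V) (r : ℕ), B = graphBall G v r)
    (S X : Set V) (hXS : X ⊆ S)
    (hcomp : ∀ c : (G.induce (Xᶜ : Set V)).ConnectedComponent,
      compSupp G X c ⊆ S ∨
      (compSupp G X c ∩ S = ∅ ∧
        ∃ c' c'' : (G.induce (Xᶜ : Set V)).ConnectedComponent, c' ≠ c'' ∧
          compSupp G X c' ⊆ S ∧ compSupp G X c'' ⊆ S ∧
          (∃ α : (compSupp G X c) ≃ (compSupp G X c'),
            (∀ u v : compSupp G X c, G.Adj u v ↔ G.Adj (α u) (α v)) ∧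
            (∀ (u : compSupp G X c) (x : V), x ∈ X → (G.Adj u x ↔ G.Adj (α u) x)) ∧
            (∀ (u : compSupp G X c) (r : ℕ),
              graphBall G u r ∈ 𝓑 ↔ graphBall G (α u) r ∈ 𝓑)) ∧
          (∃ β : (compSupp G X c) ≃ (compSupp G X c''),
            (∀ u v : compSupp G X c, G.Adj u v ↔ G.Adj (β u) (β v)) ∧
            (∀ (u : compSupp G X c) (x : V), x ∈ X → (G.Adj u x ↔ G.Adj (β u) x)) ∧
            (∀ (u : compSupp G X c) (r : ℕ),
              graphBall G u r ∈ 𝓑 ↔ graphBall G (β u) r ∈ 𝓑)))) :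
    (∀ (u : V) (hu : u ∈ S) (r : ℕ),
      graphBall G u r ∩ S = Subtype.val '' graphBall (G.induce S) ⟨u, hu⟩ r) ∧
    (∀ (u v : V), u ∈ S → v ∈ S → ∀ (r r' : ℕ),
      graphBall G u r ∈ 𝓑 → graphBall G v r' ∈ 𝓑 →
      graphBall G u r ∩ S = graphBall G v r' ∩ S →
      graphBall G u r = graphBall G v r') := by
  have hcomp' : ∀ c : (G.induce (Xᶜ : Set V)).ConnectedComponent,
      compSupp G X c ⊆ S ∨
      (compSupp G X c ∩ S = ∅ ∧
        ∃ c' c'' : (G.induce (Xᶜ : Set V)).ConnectedComponent, c' ≠ c'' ∧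
          compSupp G X c' ⊆ S ∧ compSupp G X c'' ⊆ S ∧
          (∃ α : (compSupp G X c) ≃ (compSupp G X c'),
            (∀ u v : compSupp G X c, G.Adj u v ↔ G.Adj (α u) (α v)) ∧
            (∀ (u : compSupp G X c) (x : V), x ∈ X → (G.Adj u x ↔ G.Adj (α u) x))) ∧
          (∃ β : (compSupp G X c) ≃ (compSupp G X c''),
            (∀ u v : compSupp G X c, G.Adj u v ↔ G.Adj (β u) (β v)) ∧
            (∀ (u : compSupp G X c) (x : V), x ∈ X → (G.Adj u x ↔ G.Adj (β u) x)))) := by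
    intro c
    rcases hcomp c with h | ⟨h0, c', c'', hne, h1, h2, ⟨α, ha1, ha2, _⟩, ⟨β, hb1, hb2, _⟩⟩
    · exact Or.inl h
    · exact Or.inr ⟨h0, c', c'', hne, h1, h2, ⟨α, ha1, ha2⟩, ⟨β, hb1, hb2⟩⟩
  have hcomp'' : ∀ c : (G.induce (Xᶜ : Set V)).ConnectedComponent,
      compSupp G X c ⊆ S ∨
      (compSupp G X c ∩ S = ∅ ∧
        ∃ c' : (G.induce (Xᶜ : Set V)).ConnectedComponent,
          compSupp G X c' ⊆ S ∧
          ∃ α : (compSupp G X c) ≃ (compSupp G X c'),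
            (∀ u v : compSupp G X c, G.Adj u v → G.Adj (α u) (α v)) ∧
            (∀ (u : compSupp G X c) (x : V), x ∈ X → G.Adj u x → G.Adj (α u) x)) := by
    intro c
    rcases hcomp' c with h | ⟨h0, c', _, _, h1, _, ⟨α, ha1, ha2⟩, _⟩
    · exact Or.inl h
    · exact Or.inr ⟨h0, c', h1, α, fun a b => (ha1 a b).mp, fun a x hx => (ha2 a x hx).mp⟩
  constructor
  · intro u hu r
    ext w
    constructor
    · rintro ⟨⟨p, hp⟩, hwS⟩
      obtain ⟨p', hp'⟩ := lift_walk hXS hcomp'' r u w hu hwS p hp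
      exact ⟨⟨w, hwS⟩, ⟨p', hp'⟩, rfl⟩
    · rintro ⟨x, ⟨p', hp'⟩, rfl⟩
      refine ⟨⟨(p'.map (SimpleGraph.Embedding.induce S).toHom).copy rfl rfl, ?_⟩, x.2⟩
      exact (SimpleGraph.Walk.length_copy ..).trans_le (by rw [SimpleGraph.Walk.length_map]; exact hp')
  · intro u v hu hv r r' _ _ heq
    exact Set.Subset.antisymm
      (ball_subset hXS hcomp' hu hv heq.le)
      (ball_subset hXS hcomp' hv hu heq.ge)
end

section
/- Let T be a positive non-clashing teaching map for the set 𝓑 of all balls of radius at most 1 in a graph G (i.e., all singletons B₀(v) and closed neighborhoods B₁(v)). Suppose u, v are distinct vertices with B₁(u) ⊆ B₁(v) and |B₁(v) \ B₁(u)| = 2, say B₁(v) \ B₁(u) = {a, b}. If additionally there is a vertex w with B₁(w) ⊊ B₁(v) and B₁(v) \ B₁(w) = {c} for some c ∉ {a,b}, and T has dimension at most 2, then T(B₁(v)) = {c, x} with x ∈ {a, b}. -/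
/-- `T` is a positive teaching map for the family of balls `𝓑`. -/
def IsPositiveMap {V : Type*} (𝓑 : Set (Set V)) (T : Set V → Set V) : Prop :=
  ∀ B ∈ 𝓑, T B ⊆ B

/-- `T` is non-clashing for `𝓑`. -/
def IsNonClashing {V : Type*} (𝓑 : Set (Set V)) (T : Set V → Set V) : Prop :=
  ∀ B₁ ∈ 𝓑, ∀ B₂ ∈ 𝓑, B₁ ≠ B₂ → ∃ w ∈ T B₁ ∪ T B₂, w ∉ B₁ ∩ B₂

/-- For `𝓑` the set of all balls of radius at most 1: if `B₁(u) ⊆ B₁(v)` with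
`B₁(v) \ B₁(u) = {a, b}`, and some `w` has `B₁(w) ⊊ B₁(v)` with `B₁(v) \ B₁(w) = {c}`,
`c ∉ {a, b}`, and `T` has dimension at most 2, then `T(B₁(v)) = {c, a}` or `{c, b}`. -/
theorem stmt_19 {V : Type*} [Fintype V] (G : SimpleGraph V)
    (𝓑 : Set (Set V)) (hdef : 𝓑 = {S : Set V | ∃ x : V, S = graphBall G x 0 ∨ S = graphBall G x 1})
    (T : Set V → Set V) (hpos : IsPositiveMap 𝓑 T) (hnc : IsNonClashing 𝓑 T)
    (hdim : ∀ B ∈ 𝓑, (T B).ncard ≤ 2)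
    (u v : V) (huv : u ≠ v) (hsub : graphBall G u 1 ⊆ graphBall G v 1)
    (a b : V) (hab : a ≠ b) (hdiff : graphBall G v 1 \ graphBall G u 1 = {a, b})
    (w : V) (hw : graphBall G w 1 ⊂ graphBall G v 1)
    (c : V) (hc : graphBall G v 1 \ graphBall G w 1 = {c}) (hca : c ≠ a) (hcb : c ≠ b) :
    T (graphBall G v 1) = {c, a} ∨ T (graphBall G v 1) = {c, b} := by
  set Bu := graphBall G u 1
  set Bv := graphBall G v 1
  set Bw := graphBall G w 1
  have hBu : Bu ∈ 𝓑 := by rw [hdef]; exact ⟨u, Or.inr rfl⟩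
  have hBv : Bv ∈ 𝓑 := by rw [hdef]; exact ⟨v, Or.inr rfl⟩
  have hBw : Bw ∈ 𝓑 := by rw [hdef]; exact ⟨w, Or.inr rfl⟩
  have ha : a ∈ Bv \ Bu := by rw [hdiff]; exact Or.inl rfl
  have hne_uv : Bu ≠ Bv := by
    intro h; rw [h] at ha; exact ha.2 ha.1
  -- c ∈ T Bv
  have hcmem : c ∈ T Bv := by
    obtain ⟨x, hx, hxn⟩ := hnc Bw hBw Bv hBv (ne_of_lt hw)
    have hxT : x ∈ T Bv := by
      rcases hx with hx | hx
      · exact absurd ⟨hpos Bw hBw hx, hw.1 (hpos Bw hBw hx)⟩ hxn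
      · exact hx
    have hxBv : x ∈ Bv := hpos Bv hBv hxT
    have : x ∈ Bv \ Bw := ⟨hxBv, fun hxw => hxn ⟨hxw, hxBv⟩⟩
    rw [hc] at this
    rwa [this] at hxT
  -- some element of {a,b} ∈ T Bv
  obtain ⟨y, hy, hyn⟩ := hnc Bu hBu Bv hBv hne_uv
  have hyT : y ∈ T Bv := by
    rcases hy with hy | hy
    · exact absurd ⟨hpos Bu hBu hy, hsub (hpos Bu hBu hy)⟩ hyn
    · exact hy
  have hyBv : y ∈ Bv := hpos Bv hBv hyT
  have hyd : y ∈ Bv \ Bu := ⟨hyBv, fun hyu => hyn ⟨hyu, hyBv⟩⟩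
  rw [hdiff] at hyd
  have key : ∀ x : V, x ∈ T Bv → c ≠ x → T Bv = {c, x} := by
    intro x hxT hcx
    refine (Set.eq_of_subset_of_ncard_le ?_ ?_ (Set.toFinite _)).symm
    · intro z hz; rcases hz with hz | hz
      · rwa [hz]
      · rwa [Set.mem_singleton_iff.mp hz]
    · calc (T Bv).ncard ≤ 2 := hdim Bv hBv
        _ = ({c, x} : Set V).ncard := by
            rw [Set.ncard_pair hcx]
  rcases hyd with hy | hy
  · left; rw [hy] at hyT; exact key a hyT hca
  · right; rw [Set.mem_singleton_iff.mp hy] at hyT; exact key b hyT hcb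
end
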